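/- Let n be a positive integer, F₀, G₀, F, G division rings, ι_F : F₀ → F, ι_G : G₀ → G ring embeddings, and φ₀ : F₀ → Mₙ(G₀), φ : F → Mₙ(G) ring embeddings satisfying φ(ι_F(x)) = φ₀(x) with ι_G applied entrywise, for all x ∈ F₀. Suppose φ₀ is a-tight for some a ∈ {1, …, n}. Then the image of φ₀ equals the intersection of Mₙ(G₀) with the image of φ; precisely, if f ∈ F is such that every entry of φ(f) lies in the image of ι_G, then f = ι_F(x) for some x ∈ F₀. -/
import Mathlib


/-- `φ : F → Mₙ(α)` is `a`-tight: every possible upper-right `a × (n+1-a)` block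
(rows `1,…,a`, columns `a,…,n`, one-indexed) is realized by some element of `F`. -/
def ATight {n : ℕ} {F α : Type*} (φ : F → Matrix (Fin n) (Fin n) α) (a : ℕ) : Prop :=
  ∀ g : Matrix (Fin n) (Fin n) α, ∃ x : F, ∀ i j : Fin n,
    (i : ℕ) < a → a ≤ (j : ℕ) + 1 → φ x i j = g i j

/-- A matrix over a division ring whose upper-right `a × (n+1-a)` block vanishes
(with `1 ≤ a ≤ n`) is not a unit: its first `a` rows live in an `(a-1)`-dimensional
space, hence are linearly dependent. -/
theorem not_isUnit_of_block_zero {G : Type*} [DivisionRing G] {n a : ℕ}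
    (ha : 1 ≤ a) (han : a ≤ n) (A : Matrix (Fin n) (Fin n) G)
    (hz : ∀ i j : Fin n, (i : ℕ) < a → a ≤ (j : ℕ) + 1 → A i j = 0) :
    ¬ IsUnit A := by
  intro hunit
  obtain ⟨u, hu⟩ := hunit
  have ham : a - 1 ≤ n := by omega
  -- first `a` rows, restricted to the first `a-1` columns
  set r : Fin a → (Fin (a - 1) → G) :=
    fun i j => A (Fin.castLE han i) (Fin.castLE ham j) with hr
  have hdep : ¬ LinearIndependent G r := by
    intro hind
    have := hind.fintype_card_le_finrank
    rw [Fintype.card_fin, Module.finrank_fin_fun] at this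
    omega
  obtain ⟨c, hc0, i₀, hci₀⟩ := Fintype.not_linearIndependent_iff.mp hdep
  set v : Fin n → G := fun k => if h : (k : ℕ) < a then c ⟨k, h⟩ else 0 with hv
  have hvcast : ∀ i : Fin a, v (Fin.castLE han i) = c i := by
    intro i
    have : ((Fin.castLE han i : Fin n) : ℕ) < a := i.2
    simp only [hv, dif_pos this]
    exact congrArg c (Fin.ext rfl)
  have hvA : Matrix.vecMul v A = 0 := by
    funext j
    show ∑ k : Fin n, v k * A k j = 0
    have hsum : ∑ k : Fin n, v k * A k j = ∑ i : Fin a, c i * A (Fin.castLE han i) j := by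
      symm
      calc ∑ i : Fin a, c i * A (Fin.castLE han i) j
          = ∑ i : Fin a, v (Fin.castLE han i) * A (Fin.castLE han i) j := by
            refine Finset.sum_congr rfl fun i _ => by rw [hvcast]
        _ = ∑ k ∈ Finset.univ.map ⟨Fin.castLE han, Fin.castLE_injective han⟩,
              v k * A k j := (Finset.sum_map Finset.univ ⟨Fin.castLE han, Fin.castLE_injective han⟩ (fun k => v k * A k j)).symm
        _ = ∑ k : Fin n, v k * A k j := by
            refine Finset.sum_subset (Finset.subset_univ _) fun k _ hk => ?_
            have hka : ¬ (k : ℕ) < a := by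
              intro h
              exact hk (Finset.mem_map.mpr ⟨⟨k, h⟩, Finset.mem_univ _, by
                simp [Fin.ext_iff]⟩)
            simp [hv, hka]
    rw [hsum]
    by_cases hj : a ≤ (j : ℕ) + 1
    · refine Finset.sum_eq_zero fun i _ => ?_
      rw [hz (Fin.castLE han i) j i.2 hj, mul_zero]
    · have hj' : (j : ℕ) < a - 1 := by omega
      have hkey := congrFun hc0 ⟨(j : ℕ), hj'⟩
      simp only [Finset.sum_apply, Pi.smul_apply, smul_eq_mul, Pi.zero_apply, hr] at hkey
      rw [← hkey]
      refine Finset.sum_congr rfl fun i _ => ?_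
      exact congrArg (fun t => c i * A (Fin.castLE han i) t) (Fin.ext rfl)
  set B : Matrix (Fin n) (Fin n) G := Units.val u⁻¹ with hB
  have h1 : A * B = 1 := by rw [← hu, hB]; exact u.mul_inv
  have hv0 : v = 0 := by
    have h2 : Matrix.vecMul (Matrix.vecMul v A) B = Matrix.vecMul v (A * B) :=
      Matrix.vecMul_vecMul v A B
    rw [h1, Matrix.vecMul_one, hvA, Matrix.zero_vecMul] at h2
    exact h2.symm
  have := hvcast i₀
  rw [hv0] at this
  exact hci₀ this.symm

/-- If `φ : F → Mₙ(G)` extends an `a`-tight embedding `φ₀ : F₀ → Mₙ(G₀)` along the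
embeddings `ιF : F₀ → F`, `ιG : G₀ → G`, then the image of `φ₀` is exactly the
intersection of `Mₙ(G₀)` with the image of `φ`: any `f ∈ F` all of whose matrix entries
come from `G₀` lies in (the image of) `F₀`. -/
theorem stmt19 {F₀ G₀ F G : Type*}
    [DivisionRing F₀] [DivisionRing G₀] [DivisionRing F] [DivisionRing G]
    (n : ℕ) (hn : 1 ≤ n)
    (ιF : F₀ →+* F) (ιG : G₀ →+* G)
    (hιF : Function.Injective ιF) (hιG : Function.Injective ιG)
    (φ₀ : F₀ →+* Matrix (Fin n) (Fin n) G₀) (hφ₀ : Function.Injective φ₀)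
    (φ : F →+* Matrix (Fin n) (Fin n) G) (hφ : Function.Injective φ)
    (hcompat : ∀ x : F₀, φ (ιF x) = (φ₀ x).map ⇑ιG)
    (a : ℕ) (ha : 1 ≤ a) (han : a ≤ n)
    (htight : ATight (⇑φ₀) a) :
    ∀ f : F, (∀ i j : Fin n, φ f i j ∈ Set.range ιG) → ∃ x : F₀, f = ιF x := by
  intro f hf
  choose M hM using hf
  obtain ⟨x, hx⟩ := htight M
  refine ⟨x, ?_⟩
  by_contra hne
  have hf₁ne : f - ιF x ≠ 0 := sub_ne_zero.mpr hne
  set A : Matrix (Fin n) (Fin n) G := φ (f - ιF x) with hA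
  have hAz : ∀ i j : Fin n, (i : ℕ) < a → a ≤ (j : ℕ) + 1 → A i j = 0 := by
    intro i j hi hj
    have : A i j = φ f i j - φ (ιF x) i j := by
      rw [hA, map_sub]; rfl
    rw [this, hcompat, ← hM i j, Matrix.map_apply, hx i j hi hj, sub_self]
  have hunit : IsUnit A := (isUnit_iff_ne_zero.mpr hf₁ne).map φ
  exact not_isUnit_of_block_zero ha han A hAz hunit
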